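/- Let d ≥ 1 and let s₁,…,s_d be complex numbers. The multiple series ∑_{0 < n₁ < n₂ < ⋯ < n_d} 1/(n₁^{s₁} n₂^{s₂} ⋯ n_d^{s_d}) converges absolutely if and only if ∑_{i=r}^{d} Re(s_i) > d − r + 1 for every r = 1, 2, …, d. -/

import Mathlib

open Finset

/-- Abel-type inequality: if all tail sums of `e` are nonpositive and `t` is
nonnegative and nondecreasing, then `∑ e i * t i ≤ 0`. -/
lemma sum_mul_nonpos : ∀ (m : ℕ) (t e : ℕ → ℝ), 0 ≤ t 0 → (∀ i, t i ≤ t (i+1)) →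
    (∀ r, r < m → ∑ i ∈ Finset.Ico r m, e i ≤ 0) →
    ∑ i ∈ Finset.range m, e i * t i ≤ 0 := by
  intro m
  induction m with
  | zero => intro t e _ _ _; simp
  | succ m ih =>
    intro t e ht0 htmono he
    have key : ∑ i ∈ range (m+1), e i * t i
        = (∑ i ∈ range (m+1), e i) * t 0 + ∑ i ∈ range (m+1), e i * (t i - t 0) := by
      rw [Finset.sum_mul, ← Finset.sum_add_distrib]
      apply Finset.sum_congr rfl
      intro i _; ring
    rw [key]
    have h1 : (∑ i ∈ range (m+1), e i) * t 0 ≤ 0 := by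
      apply mul_nonpos_of_nonpos_of_nonneg _ ht0
      have h := he 0 (Nat.succ_pos m)
      rwa [Finset.range_eq_Ico]
    have h2 : ∑ i ∈ range (m+1), e i * (t i - t 0) ≤ 0 := by
      rw [Finset.sum_range_succ']
      simp only [sub_self, mul_zero, add_zero]
      apply ih (fun i => t (i+1) - t 0) (fun i => e (i+1))
      · simpa using (htmono 0).trans_eq (by ring_nf)
      · intro i; simpa using htmono (i+1)
      · intro r hr
        have := he (r+1) (by omega)
        calc ∑ i ∈ Ico r m, e (i+1) = ∑ i ∈ Ico (r+1) (m+1), e i := by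
              rw [Finset.sum_Ico_eq_sum_range, Finset.sum_Ico_eq_sum_range]
              simp only [Nat.succ_sub_succ]
              apply Finset.sum_congr rfl; intro i _; ring_nf
          _ ≤ 0 := this
    linarith

/-- Product version: if `x` is `≥ 1`, nondecreasing, and tail sums of `e` are
nonpositive, then `∏ x i ^ e i ≤ 1`. -/
lemma prod_rpow_le_one (m : ℕ) (x e : ℕ → ℝ) (hx : ∀ i, 1 ≤ x i)
    (hmono : ∀ i, x i ≤ x (i+1))
    (he : ∀ r, r < m → ∑ i ∈ Finset.Ico r m, e i ≤ 0) :
    ∏ i ∈ Finset.range m, x i ^ e i ≤ 1 := by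
  have hxpos : ∀ i, (0:ℝ) < x i := fun i => lt_of_lt_of_le one_pos (hx i)
  have : ∏ i ∈ Finset.range m, x i ^ e i
      = Real.exp (∑ i ∈ Finset.range m, e i * Real.log (x i)) := by
    rw [Real.exp_sum]
    apply Finset.prod_congr rfl
    intro i _
    rw [Real.rpow_def_of_pos (hxpos i), mul_comm]
  rw [this, ← Real.exp_zero]
  apply Real.exp_le_exp.2
  apply sum_mul_nonpos m (fun i => Real.log (x i)) e
  · exact Real.log_nonneg (hx 0)
  · intro i; exact Real.log_le_log (hxpos i) (hmono i)
  · exact he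

/-- Summability of product over pi types. -/
lemma summable_pi_prod (f : ℕ → ℝ) (hf : Summable f) (h0 : ∀ k, 0 ≤ f k) :
    ∀ d : ℕ, Summable (fun n : Fin d → ℕ => ∏ i, f (n i)) := by
  intro d
  induction d with
  | zero => exact summable_of_finite_support (Set.toFinite _)
  | succ d ih =>
    have h := (hf.mul_of_nonneg ih h0 (fun n => Finset.prod_nonneg fun i _ => h0 _))
    rw [← (Fin.consEquiv fun _ : Fin (d+1) => ℕ).summable_iff]
    apply Summable.congr h
    intro p
    simp [Fin.consEquiv, Fin.prod_univ_succ]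

lemma sum_shift (σ : ℕ → ℝ) (a b : ℕ) :
    ∑ i ∈ Finset.Ico a b, σ (i+1) = ∑ i ∈ Finset.Icc (a+1) b, σ i := by
  rw [show Finset.Icc (a+1) b = Finset.Ico (a+1) (b+1) from by rw [Finset.Ico_add_one_right_eq_Icc]]
  rw [Finset.sum_Ico_eq_sum_range, Finset.sum_Ico_eq_sum_range]
  simp only [Nat.succ_sub_succ]
  apply Finset.sum_congr rfl; intro i _; ring_nf

lemma rpow_finset_sum {α : Type*} (s : Finset α) (x : ℝ) (hx : 0 < x) (f : α → ℝ) :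
    x ^ (∑ i ∈ s, f i) = ∏ i ∈ s, x ^ (f i) := by
  classical
  induction s using Finset.induction with
  | empty => simp
  | @insert a s h ih => rw [Finset.sum_insert h, Finset.prod_insert h, Real.rpow_add hx, ih]

lemma term_le (d : ℕ) (hd : 0 < d) (ε : ℝ) (σ : ℕ → ℝ)
    (htail : ∀ r', r' < d → ∑ i ∈ Finset.Ico r' d, ((1+ε) - σ (i+1)) ≤ 0)
    (n : Fin d → ℕ) (hmono : StrictMono n) (hpos : 0 < n ⟨0, hd⟩) :
    ∏ i : Fin d, (n i : ℝ) ^ (-(σ (i.1+1))) ≤ ∏ i : Fin d, (n i : ℝ) ^ (-(1+ε)) := by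
  have hn1 : ∀ i : Fin d, 1 ≤ n i := by
    intro i
    have : n ⟨0, hd⟩ ≤ n i := hmono.monotone (by simp [Fin.le_def])
    omega
  set N : ℕ → ℝ := fun l => (n ⟨min l (d-1), by omega⟩ : ℝ) with hN
  have hN1 : ∀ l, 1 ≤ N l := by
    intro l
    simp only [hN]
    exact_mod_cast hn1 _
  have hNpos : ∀ l, (0:ℝ) < N l := fun l => lt_of_lt_of_le one_pos (hN1 l)
  have hNmono : ∀ l, N l ≤ N (l+1) := by
    intro l
    simp only [hN]
    have : n ⟨min l (d-1), by omega⟩ ≤ n ⟨min (l+1) (d-1), by omega⟩ := by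
      apply hmono.monotone
      simp only [Fin.le_def]
      omega
    exact_mod_cast this
  have hNe : ∀ i : Fin d, N i.1 = (n i : ℝ) := by
    intro i
    have hi := i.isLt
    have : (⟨min i.1 (d-1), by omega⟩ : Fin d) = i := by
      apply Fin.ext
      simp only []
      omega
    simp only [hN, this]
  calc ∏ i : Fin d, (n i : ℝ) ^ (-(σ (i.1+1)))
      = ∏ l ∈ Finset.range d, N l ^ (-(σ (l+1))) := by
        rw [← Fin.prod_univ_eq_prod_range (fun l => N l ^ (-(σ (l+1)))) d]
        exact Finset.prod_congr rfl fun i _ => by rw [hNe]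
    _ = (∏ l ∈ Finset.range d, N l ^ (-(1+ε))) *
          ∏ l ∈ Finset.range d, N l ^ ((1+ε) - σ (l+1)) := by
        rw [← Finset.prod_mul_distrib]
        apply Finset.prod_congr rfl
        intro l _
        rw [← Real.rpow_add (hNpos l)]
        congr 1; ring
    _ ≤ (∏ l ∈ Finset.range d, N l ^ (-(1+ε))) * 1 := by
        apply mul_le_mul_of_nonneg_left _
          (Finset.prod_nonneg fun l _ => Real.rpow_nonneg (le_of_lt (hNpos l)) _)
        exact prod_rpow_le_one d N (fun l => (1+ε) - σ (l+1)) hN1 hNmono htail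
    _ = ∏ i : Fin d, (n i : ℝ) ^ (-(1+ε)) := by
        rw [mul_one, ← Fin.prod_univ_eq_prod_range (fun l => N l ^ (-(1+ε))) d]
        exact Finset.prod_congr rfl fun i _ => by rw [hNe]

lemma summable_of_cond (d : ℕ) (hd : 0 < d) (σ : ℕ → ℝ)
    (hc : ∀ r : ℕ, 1 ≤ r → r ≤ d → (d:ℝ) - r + 1 < ∑ i ∈ Finset.Icc r d, σ i) :
    Summable (fun p : {n : Fin d → ℕ // StrictMono n ∧ 0 < n ⟨0, hd⟩} =>
      ∏ i : Fin d, (p.1 i : ℝ) ^ (-(σ (i.1+1)))) := by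
  have hne : (Finset.Icc 1 d).Nonempty := ⟨1, by rw [Finset.mem_Icc]; omega⟩
  set δ := (Finset.Icc 1 d).inf' hne
    (fun r => (∑ i ∈ Finset.Icc r d, σ i) - ((d:ℝ) - r + 1)) with hδdef
  have hδ : 0 < δ := by
    rw [hδdef, Finset.lt_inf'_iff]
    intro r hr
    rw [Finset.mem_Icc] at hr
    have := hc r hr.1 hr.2
    linarith
  set ε := δ / d with hεdef
  have hε : 0 < ε := div_pos hδ (by exact_mod_cast hd)
  have htail : ∀ r', r' < d → ∑ i ∈ Finset.Ico r' d, ((1+ε) - σ (i+1)) ≤ 0 := by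
    intro r' hr'
    rw [Finset.sum_sub_distrib, sum_shift, Finset.sum_const, Nat.card_Ico, sub_nonpos]
    have hmem : r' + 1 ∈ Finset.Icc 1 d := by rw [Finset.mem_Icc]; omega
    have h1 : δ ≤ (∑ i ∈ Finset.Icc (r'+1) d, σ i) - ((d:ℝ) - ((r'+1 : ℕ):ℝ) + 1) :=
      Finset.inf'_le _ hmem
    have h2 : ((d - r' : ℕ) : ℝ) = (d:ℝ) - r' := by
      have : r' ≤ d := le_of_lt hr'
      push_cast [this]; ring
    have h3 : ((d - r' : ℕ) : ℝ) * ε ≤ δ := by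
      rw [h2, hεdef]
      rw [div_eq_mul_inv]
      have hd0 : (0:ℝ) < d := by exact_mod_cast hd
      have : ((d:ℝ) - r') ≤ d := by
        have : (0:ℝ) ≤ r' := Nat.cast_nonneg r'
        linarith
      calc ((d:ℝ) - r') * (δ * (d:ℝ)⁻¹) ≤ (d:ℝ) * (δ * (d:ℝ)⁻¹) := by
            apply mul_le_mul_of_nonneg_right this
            positivity
        _ = δ := by field_simp
    have h4 : ((d - r' : ℕ) : ℝ) * (1 + ε) = ((d - r' : ℕ) : ℝ) + ((d - r' : ℕ) : ℝ) * ε := by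
      ring
    rw [nsmul_eq_mul, h4]
    rw [h2] at h3 ⊢
    push_cast at h1
    linarith
  have hfs : Summable (fun k : ℕ => (k:ℝ) ^ (-(1+ε))) :=
    Real.summable_nat_rpow.2 (by linarith)
  have hf0 : ∀ k : ℕ, 0 ≤ (k:ℝ) ^ (-(1+ε)) := fun k => Real.rpow_nonneg (Nat.cast_nonneg k) _
  have hg : Summable (fun n : Fin d → ℕ => ∏ i, (n i : ℝ) ^ (-(1+ε))) :=
    summable_pi_prod _ hfs hf0 d
  have hgs : Summable (fun p : {n : Fin d → ℕ // StrictMono n ∧ 0 < n ⟨0, hd⟩} =>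
      ∏ i : Fin d, (p.1 i : ℝ) ^ (-(1+ε))) :=
    hg.comp_injective Subtype.val_injective
  apply Summable.of_nonneg_of_le _ _ hgs
  · intro p
    exact Finset.prod_nonneg fun i _ => Real.rpow_nonneg (Nat.cast_nonneg _) _
  · intro p
    exact term_le d hd ε σ htail p.1 p.2.1 p.2.2

lemma not_summable_of_bad (d : ℕ) (hd : 0 < d) (σ : ℕ → ℝ) (r : ℕ) (hr1 : 1 ≤ r) (hrd : r ≤ d)
    (hbad : ∑ i ∈ Finset.Icc r d, σ i ≤ (d:ℝ) - r + 1)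
    (hs : Summable (fun p : {n : Fin d → ℕ // StrictMono n ∧ 0 < n ⟨0, hd⟩} =>
      ∏ i : Fin d, (p.1 i : ℝ) ^ (-(σ (i.1+1))))) : False := by
  classical
  set m := d - r + 1 with hmdef
  have hm1 : 1 ≤ m := by omega
  set j₀ := 2*m + r with hj₀def
  have hj₀ : 2*m + r < 2^j₀ := Nat.lt_two_pow_self
  set Q : ℕ → ℕ := fun j => 2^(j + j₀) with hQdef
  have hQge : ∀ j, 2*m + r ≤ Q j := by
    intro j
    calc 2*m + r ≤ 2^j₀ := le_of_lt hj₀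
      _ ≤ 2^(j+j₀) := Nat.pow_le_pow_right (by norm_num) (by omega)
  set B : ℕ → ℕ := fun j => Q j / m with hBdef
  have hB1 : ∀ j, 1 ≤ B j := by
    intro j
    have hb : B j = Q j / m := rfl
    rw [hb, Nat.one_le_div_iff (by omega)]
    have := hQge j; omega
  have hBm : ∀ j, m * B j ≤ Q j := fun j => Nat.mul_div_le (Q j) m
  have hBm2 : ∀ j, Q j ≤ 2 * (m * B j) := by
    intro j
    have h1 : m * B j + Q j % m = Q j := Nat.div_add_mod (Q j) m
    have h2 : Q j % m < m := Nat.mod_lt _ (by omega)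
    have h3 := hQge j
    omega
  -- total extension of k
  set K : (j : ℕ) → (Fin m → Fin (B j)) → ℕ → ℕ :=
    fun j k l => if h : l < m then (k ⟨l, h⟩ : ℕ) else 0 with hKdef
  have hK : ∀ j k l, K j k l < B j := by
    intro j k l
    by_cases h : l < m
    · simp only [hKdef, dif_pos h]; exact (k _).2
    · simp only [hKdef, dif_neg h]; exact hB1 j
  have hKval : ∀ j (k : Fin m → Fin (B j)) (l : Fin m), K j k l.1 = (k l : ℕ) := by
    intro j k l
    simp only [hKdef, dif_pos l.2]
  -- the building map
  set M : (j : ℕ) → (Fin m → Fin (B j)) → Fin d → ℕ :=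
    fun j k i =>
      if i.1 + 1 < r then i.1 + 1
      else Q j + (i.1 - (r-1)) * B j + K j k (i.1 - (r-1)) with hMdef
  have hMeq1 : ∀ j k (i : Fin d), i.1 + 1 < r → M j k i = i.1 + 1 := by
    intro j k i h
    simp only [hMdef, if_pos h]
  have hMeq2 : ∀ j k (i : Fin d), ¬ (i.1 + 1 < r) →
      M j k i = Q j + (i.1 - (r-1)) * B j + K j k (i.1 - (r-1)) := by
    intro j k i h
    simp only [hMdef, if_neg h]
  have hstep : ∀ (j : ℕ) (i : Fin d), ¬ (i.1 + 1 < r) →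
      (i.1 - (r-1)) * B j + B j ≤ m * B j := by
    intro j i h
    have hi := i.2
    calc (i.1 - (r-1)) * B j + B j = (i.1 - (r-1) + 1) * B j := by ring
      _ ≤ m * B j := Nat.mul_le_mul_right _ (by omega)
  have hMlow : ∀ j k (i : Fin d), ¬ (i.1 + 1 < r) → Q j ≤ M j k i ∧ M j k i < 2 * Q j := by
    intro j k i h
    have hk := hK j k (i.1 - (r-1))
    have hQB := hBm j
    have hst := hstep j i h
    rw [hMeq2 j k i h]
    omega
  have hMmono : ∀ j k, StrictMono (M j k) := by
    intro j k i i' hii'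
    have hi := i.2; have hi' := i'.2
    have hval : i.1 < i'.1 := hii'
    by_cases h' : i'.1 + 1 < r
    · have h : i.1 + 1 < r := by omega
      rw [hMeq1 j k i h, hMeq1 j k i' h']
      omega
    · by_cases h : i.1 + 1 < r
      · have hQ := hQge j
        have hlow := (hMlow j k i' h').1
        rw [hMeq1 j k i h]
        omega
      · have hk := hK j k (i.1 - (r-1))
        have hk' := hK j k (i'.1 - (r-1))
        rw [hMeq2 j k i h, hMeq2 j k i' h']
        have h1 : i.1 - (r-1) + 1 ≤ i'.1 - (r-1) := by omega
        have hst : (i.1 - (r-1)) * B j + B j ≤ (i'.1 - (r-1)) * B j := by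
          calc (i.1 - (r-1)) * B j + B j = (i.1 - (r-1) + 1) * B j := by ring
            _ ≤ (i'.1 - (r-1)) * B j := Nat.mul_le_mul_right _ h1
        omega
  have hMpos : ∀ j k, 0 < M j k ⟨0, hd⟩ := by
    intro j k
    by_cases h : (⟨0, hd⟩ : Fin d).1 + 1 < r
    · rw [hMeq1 j k _ h]; omega
    · have := (hMlow j k ⟨0, hd⟩ h).1
      have := hQge j
      omega
  set φ : (Σ _j : ℕ, (Fin m → Fin (B _j))) →
      {n : Fin d → ℕ // StrictMono n ∧ 0 < n ⟨0, hd⟩} :=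
    fun x => ⟨M x.1 x.2, hMmono x.1 x.2, hMpos x.1 x.2⟩ with hφdef
  have hφinj : Function.Injective φ := by
    rintro ⟨j, k⟩ ⟨j', k'⟩ h
    have heq : M j k = M j' k' := congrArg Subtype.val h
    have hrd' : r - 1 < d := by omega
    have hfv : (⟨r-1, hrd'⟩ : Fin d).1 = r - 1 := rfl
    have hnc : ¬ ((⟨r-1, hrd'⟩ : Fin d).1 + 1 < r) := by rw [hfv]; omega
    have hj : j = j' := by
      have h1 := hMlow j k ⟨r-1, hrd'⟩ hnc
      have h2 := hMlow j' k' ⟨r-1, hrd'⟩ hnc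
      rw [heq] at h1
      have hlt : Q j < 2 * Q j' := by omega
      have hlt' : Q j' < 2 * Q j := by omega
      simp only [hQdef] at hlt hlt'
      have e1 : j + j₀ < j' + j₀ + 1 := by
        have : (2:ℕ)^(j+j₀) < 2^(j'+j₀+1) := by rw [pow_succ]; omega
        exact (Nat.pow_lt_pow_iff_right (by norm_num)).1 this
      have e2 : j' + j₀ < j + j₀ + 1 := by
        have : (2:ℕ)^(j'+j₀) < 2^(j+j₀+1) := by rw [pow_succ]; omega
        exact (Nat.pow_lt_pow_iff_right (by norm_num)).1 this
      omega
    subst hj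
    have hkk : k = k' := by
      funext l
      have hl := l.2
      have hld : r - 1 + l.1 < d := by omega
      have hv := congrFun heq ⟨r-1+l.1, hld⟩
      have hfv2 : (⟨r-1+l.1, hld⟩ : Fin d).1 = r-1+l.1 := rfl
      have hcond : ¬ ((⟨r-1+l.1, hld⟩ : Fin d).1 + 1 < r) := by rw [hfv2]; omega
      rw [hMeq2 j k _ hcond, hMeq2 j k' _ hcond] at hv
      rw [hfv2] at hv
      have hll : r - 1 + l.1 - (r-1) = l.1 := by omega
      rw [hll] at hv
      rw [hKval j k l, hKval j k' l] at hv
      apply Fin.ext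
      omega
    rw [hkk]
  -- analytic part
  set T : ℝ := ∑ i ∈ Finset.Icc r d, σ i with hTdef
  set C : ℝ := ∏ i : Fin d, (if i.1 + 1 < r then ((i.1+1 : ℕ) : ℝ) ^ (-(σ (i.1+1)))
      else (2:ℝ) ^ (-|σ (i.1+1)|)) with hCdef
  have hCpos : 0 < C := by
    apply Finset.prod_pos
    intro i _
    split
    · exact Real.rpow_pos_of_pos (by positivity) _
    · exact Real.rpow_pos_of_pos two_pos _
  have hQpos : ∀ j, (0:ℝ) < (Q j : ℝ) := by
    intro j
    have := hQge j
    positivity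
  have hQ1 : ∀ j, (1:ℝ) ≤ (Q j : ℝ) := by
    intro j
    have := hQge j
    have : 1 ≤ Q j := by omega
    exact_mod_cast this
  have hterm : ∀ j k (i : Fin d),
      (if i.1 + 1 < r then ((i.1+1 : ℕ) : ℝ) ^ (-(σ (i.1+1))) else (2:ℝ) ^ (-|σ (i.1+1)|)) *
        (if i.1 + 1 < r then 1 else (Q j : ℝ) ^ (-(σ (i.1+1))))
      ≤ ((M j k i : ℕ) : ℝ) ^ (-(σ (i.1+1))) := by
    intro j k i
    by_cases h : i.1 + 1 < r
    · rw [if_pos h, if_pos h, mul_one, hMeq1 j k i h]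
    · rw [if_neg h, if_neg h, hMeq2 j k i h]
      have hlow := hMlow j k i h
      rw [hMeq2 j k i h] at hlow
      set x : ℕ := Q j + (i.1 - (r-1)) * B j + K j k (i.1 - (r-1)) with hxdef
      have hx1 : (Q j : ℝ) ≤ (x : ℝ) := by exact_mod_cast hlow.1
      have hx2 : (x : ℝ) ≤ 2 * (Q j : ℝ) := by
        have : (x:ℕ) ≤ 2 * Q j := le_of_lt hlow.2
        exact_mod_cast this
      have hxpos : (0:ℝ) < (x:ℝ) := lt_of_lt_of_le (hQpos j) hx1
      by_cases hσ : 0 ≤ σ (i.1+1)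
      · rw [abs_of_nonneg hσ]
        calc (2:ℝ) ^ (-σ (i.1+1)) * (Q j : ℝ) ^ (-σ (i.1+1))
            = (2 * (Q j : ℝ)) ^ (-σ (i.1+1)) := by
              rw [Real.mul_rpow (by norm_num) (le_of_lt (hQpos j))]
          _ ≤ (x : ℝ) ^ (-σ (i.1+1)) :=
              Real.rpow_le_rpow_of_nonpos hxpos hx2 (by linarith)
      · push_neg at hσ
        calc (2:ℝ) ^ (-|σ (i.1+1)|) * (Q j : ℝ) ^ (-σ (i.1+1))
            ≤ 1 * (Q j : ℝ) ^ (-σ (i.1+1)) := by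
              apply mul_le_mul_of_nonneg_right _ (Real.rpow_nonneg (le_of_lt (hQpos j)) _)
              apply Real.rpow_le_one_of_one_le_of_nonpos (by norm_num)
              simp [abs_nonneg]
          _ = (Q j : ℝ) ^ (-σ (i.1+1)) := one_mul _
          _ ≤ (x : ℝ) ^ (-σ (i.1+1)) :=
              Real.rpow_le_rpow (le_of_lt (hQpos j)) hx1 (by linarith)
  have hprodQ : ∀ j, (∏ i : Fin d, (if i.1 + 1 < r then (1:ℝ) else (Q j : ℝ) ^ (-(σ (i.1+1)))))
      = (Q j : ℝ) ^ (-T) := by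
    intro j
    rw [Fin.prod_univ_eq_prod_range (fun l => if l + 1 < r then (1:ℝ)
      else (Q j : ℝ) ^ (-(σ (l+1)))) d]
    rw [Finset.range_eq_Ico, ← Finset.prod_Ico_consecutive _ (Nat.zero_le (r-1)) (by omega : r-1 ≤ d)]
    have h1 : (∏ l ∈ Finset.Ico 0 (r-1), (if l + 1 < r then (1:ℝ)
        else (Q j : ℝ) ^ (-(σ (l+1))))) = 1 := by
      apply Finset.prod_eq_one
      intro l hl
      rw [Finset.mem_Ico] at hl
      rw [if_pos (by omega)]
    have h2 : (∏ l ∈ Finset.Ico (r-1) d, (if l + 1 < r then (1:ℝ)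
        else (Q j : ℝ) ^ (-(σ (l+1))))) = (Q j : ℝ) ^ (-T) := by
      have : (∏ l ∈ Finset.Ico (r-1) d, (if l + 1 < r then (1:ℝ)
          else (Q j : ℝ) ^ (-(σ (l+1)))))
          = ∏ l ∈ Finset.Ico (r-1) d, (Q j : ℝ) ^ (-(σ (l+1))) := by
        apply Finset.prod_congr rfl
        intro l hl
        rw [Finset.mem_Ico] at hl
        rw [if_neg (by omega)]
      rw [this, ← rpow_finset_sum _ _ (hQpos j)]
      congr 1
      rw [Finset.sum_neg_distrib, neg_inj, sum_shift σ (r-1) d,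
        show r - 1 + 1 = r from by omega]
    rw [h1, h2, one_mul]
  have hFlow : ∀ j k, C * (Q j : ℝ) ^ (-T)
      ≤ ∏ i : Fin d, ((M j k i : ℕ) : ℝ) ^ (-(σ (i.1+1))) := by
    intro j k
    calc C * (Q j : ℝ) ^ (-T)
        = ∏ i : Fin d, ((if i.1 + 1 < r then ((i.1+1 : ℕ) : ℝ) ^ (-(σ (i.1+1)))
            else (2:ℝ) ^ (-|σ (i.1+1)|)) *
          (if i.1 + 1 < r then 1 else (Q j : ℝ) ^ (-(σ (i.1+1))))) := by
          rw [Finset.prod_mul_distrib, ← hCdef, hprodQ j]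
      _ ≤ ∏ i : Fin d, ((M j k i : ℕ) : ℝ) ^ (-(σ (i.1+1))) := by
          apply Finset.prod_le_prod
          · intro i _
            apply mul_nonneg
            · split
              · exact Real.rpow_nonneg (Nat.cast_nonneg _) _
              · exact Real.rpow_nonneg (by norm_num) _
            · split
              · norm_num
              · exact Real.rpow_nonneg (le_of_lt (hQpos j)) _
          · intro i _
            exact hterm j k i
  -- fiber sums
  set F : {n : Fin d → ℕ // StrictMono n ∧ 0 < n ⟨0, hd⟩} → ℝ :=
    fun p => ∏ i : Fin d, (p.1 i : ℝ) ^ (-(σ (i.1+1))) with hFdef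
  have hFnn : ∀ x : (Σ _j : ℕ, (Fin m → Fin (B _j))), 0 ≤ F (φ x) := by
    intro x
    exact Finset.prod_nonneg fun i _ => Real.rpow_nonneg (Nat.cast_nonneg _) _
  have hcomp : Summable (fun x : (Σ _j : ℕ, (Fin m → Fin (B _j))) => F (φ x)) :=
    hs.comp_injective hφinj
  obtain ⟨-, hsum2⟩ := (summable_sigma_of_nonneg hFnn).1 hcomp
  set c : ℝ := C / (2*(m:ℝ))^m with hcdef
  have hc : 0 < c := by
    rw [hcdef]
    apply div_pos hCpos
    positivity
  have hfiber : ∀ j, c ≤ ∑' k : (Fin m → Fin (B j)), F (φ ⟨j, k⟩) := by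
    intro j
    rw [tsum_fintype]
    have hcard : (Finset.univ : Finset (Fin m → Fin (B j))).card = (B j)^m := by
      rw [Finset.card_univ, Fintype.card_fun]
      simp
    have hlb : ∀ k : Fin m → Fin (B j), C * (Q j : ℝ) ^ (-T) ≤ F (φ ⟨j, k⟩) := fun k =>
      hFlow j k
    have hsumlb := Finset.card_nsmul_le_sum Finset.univ (fun k => F (φ ⟨j, k⟩))
      (C * (Q j : ℝ) ^ (-T)) (fun k _ => hlb k)
    rw [hcard, nsmul_eq_mul] at hsumlb
    push_cast at hsumlb
    refine le_trans ?_ hsumlb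
    -- c ≤ (B j)^m * (C * Q^{-T})
    have hBreal : (Q j : ℝ) ≤ 2*(m:ℝ)*(B j : ℝ) := by
      have h2 : ((Q j : ℕ):ℝ) ≤ ((2*(m*B j) : ℕ):ℝ) := Nat.cast_le.mpr (hBm2 j)
      rw [Nat.cast_mul, Nat.cast_mul, Nat.cast_ofNat] at h2
      nlinarith [h2]
    have h2m : (0:ℝ) < 2*(m:ℝ) := by positivity
    have hBlow : (Q j : ℝ) / (2*(m:ℝ)) ≤ (B j : ℝ) := by
      rw [div_le_iff₀ h2m]
      nlinarith [hBreal]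
    have hpow : ((Q j : ℝ) / (2*(m:ℝ)))^m ≤ ((B j : ℝ))^m := by
      apply pow_le_pow_left₀ (by positivity) hBlow
    have hQmT : (1:ℝ) ≤ (Q j : ℝ)^(m:ℕ) * (Q j : ℝ) ^ (-T) := by
      have hmT : 0 ≤ (m:ℝ) - T := by
        have : ((m:ℕ):ℝ) = (d:ℝ) - r + 1 := by
          rw [hmdef]
          have : r ≤ d := hrd
          push_cast [this]
          ring
        rw [this]
        linarith [hbad]
      calc (1:ℝ) = (Q j : ℝ) ^ (0:ℝ) := by rw [Real.rpow_zero]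
        _ ≤ (Q j : ℝ) ^ ((m:ℝ) - T) :=
            Real.rpow_le_rpow_of_exponent_le (hQ1 j) (by linarith)
        _ = (Q j : ℝ)^((m:ℝ)) * (Q j : ℝ) ^ (-T) := by
            rw [show (m:ℝ) - T = (m:ℝ) + (-T) from by ring, Real.rpow_add (hQpos j)]
        _ = (Q j : ℝ)^(m:ℕ) * (Q j : ℝ) ^ (-T) := by
            rw [Real.rpow_natCast]
    have hQTnn : (0:ℝ) ≤ (Q j : ℝ) ^ (-T) := Real.rpow_nonneg (le_of_lt (hQpos j)) _
    calc c = C / (2*(m:ℝ))^m * 1 := by rw [mul_one]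
      _ ≤ C / (2*(m:ℝ))^m * ((Q j : ℝ)^(m:ℕ) * (Q j : ℝ) ^ (-T)) := by
          apply mul_le_mul_of_nonneg_left hQmT (by positivity)
      _ = ((Q j : ℝ) / (2*(m:ℝ)))^m * (C * (Q j : ℝ) ^ (-T)) := by
          rw [div_pow]
          ring
      _ ≤ ((B j : ℝ))^m * (C * (Q j : ℝ) ^ (-T)) := by
          apply mul_le_mul_of_nonneg_right hpow
          positivity
  have htend : Filter.Tendsto (fun j => ∑' k : (Fin m → Fin (B j)), F (φ ⟨j, k⟩))
      Filter.atTop (nhds 0) := hsum2.tendsto_atTop_zero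
  obtain ⟨j, hj⟩ := (htend.eventually_lt_const hc).exists
  exact absurd (hfiber j) (not_le.2 hj)

open MeasureTheory

/-- Pochhammer symbol `(x)_k = x(x+1)⋯(x+k-1)`. -/
noncomputable def poch (x : ℂ) (k : ℕ) : ℂ := ∏ i ∈ Finset.range k, (x + (i : ℂ))

/-- Generalized hypergeometric series with upper parameters `α`, lower parameters `β`. -/
noncomputable def hyp (α β : List ℂ) (z : ℂ) : ℂ :=
  ∑' k : ℕ, ((α.map fun w => poch w k).prod /
    ((β.map fun w => poch w k).prod * (Nat.factorial k : ℂ))) * z ^ k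

/-- Nested expression: `nestR [x₁,…,x_m] = 1 - (1 - (⋯(1 - x_m)x_{m-1}⋯))x₁`. -/
def nestR : List ℝ → ℝ
  | [] => 1
  | t :: rest => 1 - nestR rest * t

/-- The Vasilyev-type integral `J_m(a₀,…,a_m; b₁,…,b_m; z)`. -/
noncomputable def Jint (m : ℕ) (a b : ℕ → ℂ) (z : ℂ) : ℂ :=
  ∫ x in Set.univ.pi fun _ : Fin m => Set.Ioo (0:ℝ) 1,
    (∏ i : Fin m, ((x i : ℂ) ^ (a (i.1+1) - 1) *
        ((1 - x i : ℝ) : ℂ) ^ (b (i.1+1) - a (i.1+1) - 1))) /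
      ((1 - ((nestR (List.ofFn x).tail * (List.ofFn x).headI : ℝ) : ℂ) * z) ^ (a 0))

/-- domain of absolute convergence of the multizeta function. -/
theorem multizeta_convergence (d : ℕ) (hd : 0 < d) (S : ℕ → ℂ) :
    Summable (fun p : {n : Fin d → ℕ // StrictMono n ∧ 0 < n ⟨0, hd⟩} =>
        ∏ i : Fin d, (p.1 i : ℝ) ^ (-(S (i.1+1)).re)) ↔
      (∀ r : ℕ, 1 ≤ r → r ≤ d →
        (d : ℝ) - r + 1 < ∑ i ∈ Finset.Icc r d, (S i).re) := by
  constructor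
  · intro hs r hr1 hrd
    by_contra hlt
    push_neg at hlt
    exact not_summable_of_bad d hd (fun i => (S i).re) r hr1 hrd hlt hs
  · intro hc
    exact summable_of_cond d hd (fun i => (S i).re) hc
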